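/- If $p$ and $q$ are real polynomials with strictly alternating (interlacing) real roots, then every nonzero polynomial in the real linear span $\{c_1 p + c_2 q : c_1, c_2 \in \mathbb{R}\}$ has only real and simple roots. -/

import Mathlib

open Polynomial Filter
open Polynomial Filter

lemma aux_end_hi (f : Polynomial ℝ) (hdeg : 0 < f.natDegree) (M : ℝ) :
    ∃ x, M < x ∧ 0 < f.leadingCoeff * f.eval x := by
  have hf : f ≠ 0 := fun h => by simp [h] at hdeg
  have hd : 0 < f.degree := natDegree_pos_iff_degree_pos.mp hdeg
  rcases (leadingCoeff_ne_zero.mpr hf).lt_or_gt with hlc | hlc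
  · have T := f.tendsto_atBot_of_leadingCoeff_nonpos hd hlc.le
    obtain ⟨x, h1, h2⟩ := ((T.eventually (eventually_lt_atBot 0)).and (eventually_gt_atTop M)).exists
    exact ⟨x, h2, mul_pos_of_neg_of_neg hlc h1⟩
  · have T := f.tendsto_atTop_of_leadingCoeff_nonneg hd hlc.le
    obtain ⟨x, h1, h2⟩ := ((T.eventually (eventually_gt_atTop 0)).and (eventually_gt_atTop M)).exists
    exact ⟨x, h2, mul_pos hlc h1⟩

lemma aux_end_lo (f : Polynomial ℝ) (hdeg : 0 < f.natDegree) (M : ℝ) :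
    ∃ x, x < M ∧ 0 < (-1) ^ f.natDegree * f.leadingCoeff * f.eval x := by
  set g := f.comp (-X) with hg
  have hgd : g.natDegree = f.natDegree := by
    simp [hg, natDegree_comp]
  have hglc : g.leadingCoeff = f.leadingCoeff * (-1) ^ f.natDegree := by
    rw [hg, leadingCoeff_comp (p := f) (q := (-X : Polynomial ℝ)) (by simp)]
    simp [leadingCoeff_neg]
  obtain ⟨x, hx, hpos⟩ := aux_end_hi g (by rwa [hgd]) (-M)
  refine ⟨-x, by linarith, ?_⟩
  have he : g.eval x = f.eval (-x) := by simp [hg, eval_comp]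
  rw [hglc, he] at hpos
  nlinarith [hpos]

lemma root_between (f : Polynomial ℝ) {x y : ℝ} (hxy : x < y)
    (h : f.eval x * f.eval y < 0) : ∃ r, x < r ∧ r < y ∧ f.eval r = 0 := by
  have hc : ContinuousOn (fun t => f.eval t) (Set.Icc x y) :=
    (f.continuous_aeval).continuousOn
  rcases lt_or_ge (f.eval x) 0 with hx | hx
  · have hy : 0 < f.eval y := by nlinarith
    have h0 : (0:ℝ) ∈ Set.Ioo (f.eval x) (f.eval y) := ⟨hx, hy⟩
    obtain ⟨r, hr, hr0⟩ := intermediate_value_Ioo hxy.le hc h0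
    exact ⟨r, hr.1, hr.2, hr0⟩
  · have hx' : 0 < f.eval x := lt_of_le_of_ne hx (by rintro h0; rw [← h0] at h; simp at h)
    have hy : f.eval y < 0 := by nlinarith
    have h0 : (0:ℝ) ∈ Set.Ioo (f.eval y) (f.eval x) := ⟨hy, hx'⟩
    obtain ⟨r, hr, hr0⟩ := intermediate_value_Ioo' hxy.le hc h0
    exact ⟨r, hr.1, hr.2, hr0⟩

lemma conclude (f : Polynomial ℝ) (hf : f ≠ 0) (s : Finset ℝ)
    (hcard : s.card = f.natDegree) (hroot : ∀ x ∈ s, f.IsRoot x) :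
    f.roots.card = f.natDegree ∧ f.roots.Nodup := by
  have hle : s.val ≤ f.roots := by
    rw [Multiset.le_iff_count]
    intro x
    by_cases hx : x ∈ s
    · rw [Multiset.count_eq_one_of_mem s.nodup hx]
      exact Multiset.one_le_count_iff_mem.mpr (mem_roots'.mpr ⟨hf, hroot x hx⟩)
    · rw [Multiset.count_eq_zero.mpr (by simpa using hx)]
      exact Nat.zero_le _
  have h1 : f.roots.card = f.natDegree :=
    le_antisymm (f.card_roots')
      (by rw [← hcard]; exact Multiset.card_le_card hle)
  have heq : s.val = f.roots :=
    Multiset.eq_of_le_of_card_le hle (by rw [h1, ← hcard]; exact le_rfl)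
  exact ⟨h1, heq ▸ s.nodup⟩


/-- If `p` and `q` are real polynomials with strictly alternating
(interlacing) real, simple roots (here `p` of degree `n` with roots `ρ`, `q` of
degree `n+1` with roots `μ`, strictly interlaced), then every nonzero polynomial
in the real span `{c₁ p + c₂ q}` has only real and simple roots (i.e. its
multiset of real roots has full cardinality equal to the degree, with no
repetitions). -/
theorem stmt0 (n : ℕ) (p q : Polynomial ℝ) (a b : ℝ) (ha : a ≠ 0) (hb : b ≠ 0)
    (ρ : Fin n → ℝ) (μ : Fin (n + 1) → ℝ) (hρ : StrictMono ρ) (hμ : StrictMono μ)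
    (hp : p = C a * ∏ i : Fin n, (X - C (ρ i)))
    (hq : q = C b * ∏ j : Fin (n + 1), (X - C (μ j)))
    (hint : ∀ i : Fin n, μ i.castSucc < ρ i ∧ ρ i < μ i.succ) :
    ∀ c₁ c₂ : ℝ, c₁ • p + c₂ • q ≠ 0 →
      (c₁ • p + c₂ • q).roots.card = (c₁ • p + c₂ • q).natDegree ∧
        (c₁ • p + c₂ • q).roots.Nodup := by
  -- basic degree facts
  have hpdeg : p.natDegree = n := by
    rw [hp, natDegree_C_mul ha, natDegree_prod _ _ (fun i _ => X_sub_C_ne_zero (ρ i))]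
    simp
  have hqdeg : q.natDegree = n + 1 := by
    rw [hq, natDegree_C_mul hb, natDegree_prod _ _ (fun i _ => X_sub_C_ne_zero (μ i))]
    simp
  -- ordering helpers
  have hμρ : ∀ (i : Fin n) (j : Fin (n+1)), (i : ℕ) < (j : ℕ) → ρ i < μ j := by
    intro i j hij
    exact lt_of_lt_of_le (hint i).2 (hμ.monotone (by simp [Fin.le_def]; omega))
  have hρμ : ∀ (i : Fin n) (j : Fin (n+1)), (j : ℕ) ≤ (i : ℕ) → μ j < ρ i := by
    intro i j hij
    exact lt_of_le_of_lt (hμ.monotone (a := j) (b := i.castSucc) (by simp [Fin.le_def]; omega)) (hint i).1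
  -- products at the μ nodes
  set S : Fin (n+1) → ℝ := fun j => ∏ i : Fin n, (μ j - ρ i) with hS
  have hSne : ∀ j, S j ≠ 0 := by
    intro j
    refine Finset.prod_ne_zero_iff.mpr fun i _ => sub_ne_zero.mpr ?_
    rcases lt_or_ge (i : ℕ) (j : ℕ) with h | h
    · exact (hμρ i j h).ne'
    · exact (hρμ i j h).ne
  have hevalp : ∀ j, p.eval (μ j) = a * S j := by
    intro j; simp [hp, hS, eval_prod]
  have hevalq : ∀ j, q.eval (μ j) = 0 := by
    intro j
    rw [hq]
    simp only [eval_mul, eval_prod, eval_sub, eval_X, eval_C]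
    rw [Finset.prod_eq_zero (Finset.mem_univ j) (by simp)]
    ring
  -- sign flip across consecutive nodes
  have hflip : ∀ j : Fin n, (a * S j.castSucc) * (a * S j.succ) < 0 := by
    intro j
    have hprod : (a * S j.castSucc) * (a * S j.succ)
        = a ^ 2 * ∏ i : Fin n, ((μ j.castSucc - ρ i) * (μ j.succ - ρ i)) := by
      simp only [hS]
      rw [Finset.prod_mul_distrib]; ring
    have hgj : (μ j.castSucc - ρ j) * (μ j.succ - ρ j) < 0 :=
      mul_neg_of_neg_of_pos (sub_neg.mpr (hint j).1) (sub_pos.mpr (hint j).2)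
    have hgi : ∀ i ∈ Finset.univ.erase j, 0 < (μ j.castSucc - ρ i) * (μ j.succ - ρ i) := by
      intro i hi
      have hij : i ≠ j := Finset.ne_of_mem_erase hi
      rcases lt_or_ge (i : ℕ) (j : ℕ) with h | h
      · have h1 : ρ i < μ j.castSucc := hμρ i j.castSucc (by simpa using h)
        have h2 : ρ i < μ j.succ := hμρ i j.succ (by simp; omega)
        exact mul_pos (sub_pos.mpr h1) (sub_pos.mpr h2)
      · have h' : (j : ℕ) < (i : ℕ) :=
          lt_of_le_of_ne h (by simpa [Fin.ext_iff, eq_comm] using hij)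
        have h1 : μ j.castSucc < ρ i := hρμ i j.castSucc (by simp; omega)
        have h2 : μ j.succ < ρ i := hρμ i j.succ (by simp; omega)
        exact mul_pos_of_neg_of_neg (by linarith) (by linarith)
    have hPn : (∏ i : Fin n, ((μ j.castSucc - ρ i) * (μ j.succ - ρ i))) < 0 := by
      rw [← Finset.mul_prod_erase _ _ (Finset.mem_univ j)]
      exact mul_neg_of_neg_of_pos hgj (Finset.prod_pos hgi)
    have ha2 : 0 < a ^ 2 := by positivity
    rw [hprod]
    exact mul_neg_of_pos_of_neg ha2 hPn
  -- chained alternation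
  have hchain : ∀ m : ℕ, ∀ hm : m < n + 1,
      0 < (-1 : ℝ) ^ m * ((a * S ⟨0, Nat.succ_pos n⟩) * (a * S ⟨m, hm⟩)) := by
    intro m
    induction m with
    | zero =>
      intro hm
      have h0 : a * S ⟨0, hm⟩ ≠ 0 := mul_ne_zero ha (hSne _)
      simpa using mul_self_pos.mpr h0
    | succ m ih =>
      intro hm
      have hm' : m < n + 1 := by omega
      have hmn : m < n := by omega
      have hf := hflip ⟨m, hmn⟩
      have e1 : (⟨m, hmn⟩ : Fin n).castSucc = (⟨m, hm'⟩ : Fin (n+1)) := rfl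
      have e2 : (⟨m, hmn⟩ : Fin n).succ = (⟨m + 1, hm⟩ : Fin (n+1)) := rfl
      rw [e1, e2] at hf
      have hprev := ih hm'
      rw [pow_succ]
      nlinarith [mul_pos hprev (neg_pos.mpr hf), sq_nonneg (a * S ⟨m, hm'⟩)]
  intro c₁ c₂ hne
  set f := c₁ • p + c₂ • q with hf
  by_cases hc2 : c₂ = 0
  · -- f = c₁ • p
    have hc1 : c₁ ≠ 0 := by
      intro h; apply hne; rw [hf, h, hc2]; simp
    have hfp : f = C c₁ * p := by rw [hf, hc2, smul_eq_C_mul]; simp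
    have hfd : f.natDegree = n := by rw [hfp, natDegree_C_mul hc1, hpdeg]
    refine conclude f hne (Finset.image ρ Finset.univ) ?_ ?_
    · rw [Finset.card_image_of_injective _ hρ.injective, hfd]; simp
    · intro x hx
      obtain ⟨i, _, rfl⟩ := Finset.mem_image.mp hx
      have : p.eval (ρ i) = 0 := by
        rw [hp]
        simp only [eval_mul, eval_prod, eval_sub, eval_X, eval_C]
        rw [Finset.prod_eq_zero (Finset.mem_univ i) (by simp)]
        ring
      simp [IsRoot, hfp, this]
  · -- c₂ ≠ 0, so deg f = n + 1
    have hqd' : (c₂ • q).natDegree = n + 1 := by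
      rw [smul_eq_C_mul, natDegree_C_mul hc2, hqdeg]
    have hfd : f.natDegree = n + 1 := by
      rw [hf, natDegree_add_eq_right_of_natDegree_lt, hqd']
      rw [hqd']
      exact lt_of_le_of_lt (natDegree_smul_le c₁ p) (by omega)
    by_cases hc1 : c₁ = 0
    · -- f = c₂ • q, roots are the μ's
      refine conclude f hne (Finset.image μ Finset.univ) ?_ ?_
      · rw [Finset.card_image_of_injective _ hμ.injective, hfd]; simp
      · intro x hx
        obtain ⟨j, _, rfl⟩ := Finset.mem_image.mp hx
        simp [IsRoot, hf, hc1, hevalq j]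
    · -- the interesting case: both coefficients nonzero
      have hfμ : ∀ j, f.eval (μ j) = c₁ * (a * S j) := by
        intro j
        simp [hf, hevalq j, hevalp j]
      -- middle roots
      have hmid : ∀ j : Fin n, ∃ r, μ j.castSucc < r ∧ r < μ j.succ ∧ f.eval r = 0 := by
        intro j
        apply root_between f (hμ (Fin.castSucc_lt_succ : j.castSucc < j.succ))
        rw [hfμ, hfμ]
        have h1 := hflip j
        have hc1sq : 0 < c₁ ^ 2 := by positivity
        nlinarith
      choose r hr1 hr2 hr3 using hmid
      -- outer root
      have hfz : 0 < f.natDegree := by omega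
      obtain ⟨R, hR1, hR2⟩ := aux_end_hi f hfz (μ (Fin.last n))
      obtain ⟨L, hL1, hL2⟩ := aux_end_lo f hfz (μ 0)
      rw [hfd] at hL2
      have hlast : (Fin.last n) = (⟨n, lt_add_one n⟩ : Fin (n+1)) := rfl
      have hzero : (0 : Fin (n+1)) = (⟨0, Nat.succ_pos n⟩ : Fin (n+1)) := rfl
      have hch := hchain n (lt_add_one n)
      have h4 : ((-1 : ℝ) ^ n) * ((-1 : ℝ) ^ n) = 1 := by
        rw [← pow_add]
        exact Even.neg_one_pow ⟨n, rfl⟩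
      have hmu0 : f.eval (μ 0) = c₁ * (a * S ⟨0, Nat.succ_pos n⟩) := by
        rw [hfμ 0, hzero]
      have hmun : f.eval (μ (Fin.last n)) = c₁ * (a * S ⟨n, lt_add_one n⟩) := by
        rw [hfμ (Fin.last n), hlast]
      have hlcne : f.leadingCoeff ≠ 0 := leadingCoeff_ne_zero.mpr hne
      have hB : 0 < (-1 : ℝ) ^ n * (f.eval (μ 0) * f.eval (μ (Fin.last n))) := by
        rw [hmu0, hmun]
        nlinarith [mul_pos (show (0:ℝ) < c₁ ^ 2 by positivity) hch]
      have key : (f.eval L * f.eval (μ 0)) * (f.eval (μ (Fin.last n)) * f.eval R) < 0 := by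
        have hA := mul_pos (mul_pos hL2 hR2) hB
        have e1 : ((-1:ℝ) ^ (n+1) * f.leadingCoeff * f.eval L) * (f.leadingCoeff * f.eval R)
            * ((-1:ℝ) ^ n * (f.eval (μ 0) * f.eval (μ (Fin.last n))))
            = ((-1:ℝ) ^ n * (-1:ℝ) ^ n) * (-(f.leadingCoeff * f.leadingCoeff)
              * ((f.eval L * f.eval (μ 0)) * (f.eval (μ (Fin.last n)) * f.eval R))) := by
          rw [pow_succ]; ring
        rw [e1, h4, one_mul] at hA
        nlinarith [mul_self_pos.mpr hlcne]
      -- extract the outer root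
      obtain ⟨rstar, hstarz, hside⟩ :
          ∃ rr, f.eval rr = 0 ∧ (rr < μ 0 ∨ μ (Fin.last n) < rr) := by
        rcases lt_trichotomy (f.eval L * f.eval (μ 0)) 0 with hcase | hcase | hcase
        · obtain ⟨r0, _, hr0b, hr0z⟩ := root_between f hL1 hcase
          exact ⟨r0, hr0z, Or.inl hr0b⟩
        · rw [hcase, zero_mul] at key; exact absurd key (lt_irrefl 0)
        · have hcase2 : f.eval (μ (Fin.last n)) * f.eval R < 0 := by nlinarith
          obtain ⟨r0, hr0b, _, hr0z⟩ := root_between f hR1 hcase2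
          exact ⟨r0, hr0z, Or.inr hr0b⟩
      -- assemble all n + 1 distinct roots
      have hrmono : StrictMono r := by
        intro j k hjk
        calc r j < μ j.succ := hr2 j
          _ ≤ μ k.castSucc := hμ.monotone
              (by simp only [Fin.le_def, Fin.val_succ, Fin.coe_castSucc]
                  exact Fin.lt_def.mp hjk)
          _ < r k := hr1 k
      have hbound : ∀ j : Fin n, μ 0 ≤ μ j.castSucc ∧ μ j.succ ≤ μ (Fin.last n) := by
        intro j
        exact ⟨hμ.monotone (Fin.zero_le _),
          hμ.monotone (by simp only [Fin.le_def, Fin.val_succ, Fin.val_last]; omega)⟩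
      have hnot : rstar ∉ Finset.image r Finset.univ := by
        simp only [Finset.mem_image, Finset.mem_univ, true_and]
        rintro ⟨j, hj⟩
        rcases hside with h | h
        · rw [← hj] at h; linarith [(hbound j).1, hr1 j]
        · rw [← hj] at h; linarith [(hbound j).2, hr2 j]
      refine conclude f hne (insert rstar (Finset.image r Finset.univ)) ?_ ?_
      · rw [Finset.card_insert_of_notMem hnot,
          Finset.card_image_of_injective _ hrmono.injective, hfd]
        simp
      · intro x hx
        rcases Finset.mem_insert.mp hx with rfl | hx'
        · exact hstarz
        · obtain ⟨j, _, rfl⟩ := Finset.mem_image.mp hx'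
          exact hr3 j
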